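/- In the AP mechanism with reserve cost r ≥ 0, if the winning set S* has width w ≥ 1 (i.e., w agents own elements of S*), then the payment to each winning agent i satisfies p_i ≤ r / 2^{w−1}, and hence the total payment Σ_i p_i ≤ w · r / 2^{w−1} ≤ r. -/

import Mathlib

/-- AP no-loss: each winner's payment is at most `r/2^{w−1}`, the total is at most
`w · r / 2^{w−1}`, which never exceeds the reserve cost `r`. -/
theorem ap_no_loss {ι : Type*} (r : ℝ) (hr : 0 ≤ r)
    (W : Finset ι) (w : ℕ) (hw : 1 ≤ w) (hcard : W.card = w)
    (B C p : ι → ℝ) (hC : ∀ i ∈ W, 0 ≤ C i)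
    (hp : ∀ i ∈ W, p i = min r (B i) - (C i + (1 - (2 : ℝ) ^ (1 - (w : ℤ))) * r)) :
    (∀ i ∈ W, p i ≤ r / (2 : ℝ) ^ ((w : ℤ) - 1)) ∧
      ∑ i ∈ W, p i ≤ (w : ℝ) * (r / (2 : ℝ) ^ ((w : ℤ) - 1)) ∧
        (w : ℝ) * (r / (2 : ℝ) ^ ((w : ℤ) - 1)) ≤ r := by
  have h2 : (0:ℝ) < (2:ℝ) ^ ((w : ℤ) - 1) := zpow_pos (by norm_num) _
  have hkey : r / (2 : ℝ) ^ ((w : ℤ) - 1) = (2 : ℝ) ^ (1 - (w : ℤ)) * r := by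
    rw [div_eq_iff (ne_of_gt h2)]
    rw [mul_comm ((2:ℝ) ^ (1 - (w:ℤ))) r, mul_assoc, ← zpow_add₀ (by norm_num : (2:ℝ) ≠ 0)]
    simp
  have hbound : ∀ i ∈ W, p i ≤ r / (2 : ℝ) ^ ((w : ℤ) - 1) := by
    intro i hi
    rw [hp i hi, hkey]
    have := hC i hi
    have hmin : min r (B i) ≤ r := min_le_left _ _
    nlinarith
  refine ⟨hbound, ?_, ?_⟩
  · calc ∑ i ∈ W, p i ≤ ∑ i ∈ W, r / (2 : ℝ) ^ ((w : ℤ) - 1) :=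
          Finset.sum_le_sum hbound
      _ = (w : ℝ) * (r / (2 : ℝ) ^ ((w : ℤ) - 1)) := by
          rw [Finset.sum_const, hcard, nsmul_eq_mul]
  · rw [mul_div_assoc', div_le_iff₀ h2]
    have hwle : (w : ℝ) ≤ (2 : ℝ) ^ ((w : ℤ) - 1) := by
      have : (w : ℤ) - 1 = ((w - 1 : ℕ) : ℤ) := by omega
      rw [this, zpow_natCast]
      calc (w : ℝ) = ((w - 1 : ℕ) : ℝ) + 1 := by
              push_cast [Nat.cast_sub hw]; ring
        _ ≤ (2 : ℝ) ^ (w - 1 : ℕ) := by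
              have := one_add_mul_le_pow (by norm_num : (-2:ℝ) ≤ 1) (w - 1)
              norm_num at this; linarith
    nlinarith
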